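/- Let R be a commutative Noetherian ring, x an R-regular element (a nonzerodivisor), and M a finitely generated R-module such that x is a nonzerodivisor on M and x·M ≠ M, there is for each n ≥ 0 an isomorphism of R/xR-modules between the n-th syzygy over R/xR of Ω¹_R(M)/xΩ¹_R(M) and Ω^{n+1}_R(M)/xΩ^{n+1}_R(M), where syzygies are taken with respect to chosen projective covers in a fixed projective resolution. -/

import Mathlib

universe u

variable (R : Type u) [CommRing R]

/-- `IsSyzygy R n K M` : `K` is an `n`-th syzygy of `M`, i.e. there is an exact sequence
`0 → K → Rᵃⁿ⁻¹ → ⋯ → Rᵃ⁰ → M → 0` with finitely generated free middle terms. -/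
def IsSyzygy : ℕ → ModuleCat.{u} R → ModuleCat.{u} R → Prop
  | 0, K, M => Nonempty (K ≃ₗ[R] M)
  | n + 1, K, M => ∃ (k : ℕ) (f : (Fin k → R) →ₗ[R] M), Function.Surjective f ∧
      IsSyzygy n K (ModuleCat.of R (LinearMap.ker f))

namespace SyzAux

open LinearMap Submodule Pointwise

section General

variable {A : Type u} [CommRing A]

/-- Stable isomorphism of modules. -/
def StIso (A : Type u) [CommRing A] (M N : Type u) [AddCommGroup M] [Module A M]
    [AddCommGroup N] [Module A N] : Prop :=
  ∃ a b : ℕ, Nonempty ((M × (Fin a → A)) ≃ₗ[A] (N × (Fin b → A)))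

/-- `(Fin a → A) × (Fin b → A) ≃ Fin (a+b) → A`. -/
noncomputable def finProd (a b : ℕ) : ((Fin a → A) × (Fin b → A)) ≃ₗ[A] (Fin (a + b) → A) :=
  (LinearEquiv.sumArrowLequivProdArrow _ _ A A).symm.trans
    (LinearEquiv.funCongrLeft A A finSumFinEquiv.symm)

variable {M N P M' N' : Type u} [AddCommGroup M] [Module A M] [AddCommGroup N] [Module A N]
  [AddCommGroup P] [Module A P] [AddCommGroup M'] [Module A M'] [AddCommGroup N'] [Module A N']

theorem StIso.of_equiv (e : M ≃ₗ[A] N) : StIso A M N :=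
  ⟨0, 0, ⟨e.prodCongr (LinearEquiv.refl A _)⟩⟩

theorem StIso.symm (h : StIso A M N) : StIso A N M := by
  obtain ⟨a, b, ⟨e⟩⟩ := h
  exact ⟨b, a, ⟨e.symm⟩⟩

theorem StIso.congr (eM : M ≃ₗ[A] M') (eN : N ≃ₗ[A] N') (h : StIso A M N) : StIso A M' N' := by
  obtain ⟨a, b, ⟨e⟩⟩ := h
  exact ⟨a, b, ⟨((eM.symm.prodCongr (LinearEquiv.refl A _)).trans e).trans
    (eN.prodCongr (LinearEquiv.refl A _))⟩⟩

/-- `(M × X) × Y ≃ (M × Y) × X` -/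
noncomputable def shuffle (M X Y : Type u) [AddCommGroup M] [Module A M] [AddCommGroup X]
    [Module A X] [AddCommGroup Y] [Module A Y] : ((M × X) × Y) ≃ₗ[A] ((M × Y) × X) :=
  (LinearEquiv.prodAssoc A M X Y).trans <|
    ((LinearEquiv.refl A M).prodCongr (LinearEquiv.prodComm A X Y)).trans
      (LinearEquiv.prodAssoc A M Y X).symm

theorem StIso.trans (h1 : StIso A M N) (h2 : StIso A N P) : StIso A M P := by
  obtain ⟨a, b, ⟨e⟩⟩ := h1
  obtain ⟨c, d, ⟨e'⟩⟩ := h2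
  refine ⟨a + c, d + b, ⟨?_⟩⟩
  have t1 : (M × (Fin (a + c) → A)) ≃ₗ[A] ((M × (Fin a → A)) × (Fin c → A)) :=
    ((LinearEquiv.refl A M).prodCongr (finProd a c).symm).trans
      (LinearEquiv.prodAssoc A _ _ _).symm
  have t2 : ((M × (Fin a → A)) × (Fin c → A)) ≃ₗ[A] ((N × (Fin b → A)) × (Fin c → A)) :=
    e.prodCongr (LinearEquiv.refl A _)
  have t3 : ((N × (Fin b → A)) × (Fin c → A)) ≃ₗ[A] ((N × (Fin c → A)) × (Fin b → A)) :=
    shuffle N _ _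
  have t4 : ((N × (Fin c → A)) × (Fin b → A)) ≃ₗ[A] ((P × (Fin d → A)) × (Fin b → A)) :=
    e'.prodCongr (LinearEquiv.refl A _)
  have t5 : ((P × (Fin d → A)) × (Fin b → A)) ≃ₗ[A] (P × (Fin (d + b) → A)) :=
    (LinearEquiv.prodAssoc A _ _ _).trans ((LinearEquiv.refl A P).prodCongr (finProd d b))
  exact (((t1.trans t2).trans t3).trans t4).trans t5

/-- A split surjection decomposes the source as kernel times target. -/
noncomputable def equivOfSplit {X P : Type u} [AddCommGroup X] [Module A X] [AddCommGroup P]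
    [Module A P] (π : X →ₗ[A] P) (s : P →ₗ[A] X) (hs : ∀ p, π (s p) = p) :
    X ≃ₗ[A] (↥(ker π) × P) where
  toFun x := (⟨x - s (π x), by simp [mem_ker, hs]⟩, π x)
  invFun kp := kp.1.1 + s kp.2
  left_inv x := by simp
  right_inv := fun ⟨k, p⟩ => by
    have hk : π (k : X) = 0 := k.2
    ext
    · simp [hk, hs]
    · simp [hk, hs]
  map_add' x y := by
    ext
    · simp [add_sub_add_comm]
    · simp
  map_smul' c x := by
    ext
    · simp [smul_sub]
    · simp

/-- Schanuel's lemma. -/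
theorem schanuel {N P Q : Type u} [AddCommGroup N] [Module A N] [AddCommGroup P] [Module A P]
    [AddCommGroup Q] [Module A Q] [Module.Projective A P] [Module.Projective A Q]
    (f : P →ₗ[A] N) (g : Q →ₗ[A] N) (hf : Function.Surjective f) (hg : Function.Surjective g) :
    Nonempty ((↥(ker f) × Q) ≃ₗ[A] (↥(ker g) × P)) := by
  set X : Submodule A (P × Q) :=
    ker ((f.comp (LinearMap.fst A P Q)) - (g.comp (LinearMap.snd A P Q))) with hX
  have hmemX : ∀ pq : P × Q, pq ∈ X ↔ f pq.1 = g pq.2 := by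
    intro pq
    simp [hX, mem_ker, sub_eq_zero]
  let π1 : ↥X →ₗ[A] P := (LinearMap.fst A P Q).comp X.subtype
  let π2 : ↥X →ₗ[A] Q := (LinearMap.snd A P Q).comp X.subtype
  have hπ1app : ∀ v : ↥X, π1 v = (v : P × Q).1 := fun v => rfl
  have hπ2app : ∀ v : ↥X, π2 v = (v : P × Q).2 := fun v => rfl
  have hπ1 : Function.Surjective π1 := by
    intro p
    obtain ⟨q, hq⟩ := hg (f p)
    exact ⟨⟨(p, q), (hmemX (p, q)).2 hq.symm⟩, rfl⟩
  have hπ2 : Function.Surjective π2 := by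
    intro q
    obtain ⟨p, hp⟩ := hf (g q)
    exact ⟨⟨(p, q), (hmemX (p, q)).2 hp⟩, rfl⟩
  let e1 : ↥(ker π1) ≃ₗ[A] ↥(ker g) :=
    { toFun := fun v => ⟨((v : ↥X) : P × Q).2, by
        have h1 : ((v : ↥X) : P × Q).1 = 0 := by
          have := mem_ker.1 v.2; rwa [hπ1app] at this
        have h2 := (hmemX ((v : ↥X) : P × Q)).1 (v : ↥X).2
        rw [h1, map_zero] at h2
        exact mem_ker.2 h2.symm⟩
      invFun := fun q => ⟨⟨(0, (q : Q)), (hmemX (0, (q : Q))).2 (by simp [mem_ker.1 q.2])⟩, by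
        rw [mem_ker, hπ1app]⟩
      left_inv := fun v => by
        apply Subtype.ext; apply Subtype.ext
        have h1 : ((v : ↥X) : P × Q).1 = 0 := by
          have := mem_ker.1 v.2; rwa [hπ1app] at this
        exact Prod.ext h1.symm rfl
      right_inv := fun q => rfl
      map_add' := fun v w => rfl
      map_smul' := fun c v => rfl }
  let e2 : ↥(ker π2) ≃ₗ[A] ↥(ker f) :=
    { toFun := fun v => ⟨((v : ↥X) : P × Q).1, by
        have h1 : ((v : ↥X) : P × Q).2 = 0 := by
          have := mem_ker.1 v.2; rwa [hπ2app] at this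
        have h2 := (hmemX ((v : ↥X) : P × Q)).1 (v : ↥X).2
        rw [h1, map_zero] at h2
        exact mem_ker.2 h2⟩
      invFun := fun p => ⟨⟨((p : P), 0), (hmemX ((p : P), 0)).2 (by simp [mem_ker.1 p.2])⟩, by
        rw [mem_ker, hπ2app]⟩
      left_inv := fun v => by
        apply Subtype.ext; apply Subtype.ext
        have h1 : ((v : ↥X) : P × Q).2 = 0 := by
          have := mem_ker.1 v.2; rwa [hπ2app] at this
        exact Prod.ext rfl h1.symm
      right_inv := fun p => rfl
      map_add' := fun v w => rfl
      map_smul' := fun c v => rfl }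
  obtain ⟨s1, hs1⟩ := Module.projective_lifting_property π1 LinearMap.id hπ1
  obtain ⟨s2, hs2⟩ := Module.projective_lifting_property π2 LinearMap.id hπ2
  have hs1' : ∀ p, π1 (s1 p) = p := fun p => LinearMap.congr_fun hs1 p
  have hs2' : ∀ q, π2 (s2 q) = q := fun q => LinearMap.congr_fun hs2 q
  have E1 : ↥X ≃ₗ[A] (↥(ker π1) × P) := equivOfSplit π1 s1 hs1'
  have E2 : ↥X ≃ₗ[A] (↥(ker π2) × Q) := equivOfSplit π2 s2 hs2'
  exact ⟨((e2.symm.prodCongr (LinearEquiv.refl A Q)).trans E2.symm).trans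
    (E1.trans (e1.prodCongr (LinearEquiv.refl A P)))⟩

/-- kernels of `f.prodMap id` -/
noncomputable def kerProdMapIdEquiv {P N : Type u} [AddCommGroup P] [Module A P] [AddCommGroup N]
    [Module A N] (f : P →ₗ[A] N) (Q : Type u) [AddCommGroup Q] [Module A Q] :
    ↥(ker (f.prodMap (LinearMap.id : Q →ₗ[A] Q))) ≃ₗ[A] ↥(ker f) where
  toFun v := ⟨((v : P × Q)).1, by
    have := mem_ker.1 v.2
    simp only [prodMap_apply, id_coe, _root_.id, Prod.mk_eq_zero] at this
    exact mem_ker.2 this.1⟩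
  invFun u := ⟨((u : P), 0), by
    simp [mem_ker, mem_ker.1 u.2]⟩
  left_inv v := by
    apply Subtype.ext
    have := mem_ker.1 v.2
    simp only [prodMap_apply, id_coe, _root_.id, Prod.mk_eq_zero] at this
    exact Prod.ext rfl this.2.symm
  right_inv u := rfl
  map_add' v w := rfl
  map_smul' c v := rfl

/-- `IsSyzygy` respects isomorphisms in both arguments. -/
theorem isSyzygy_congr : ∀ (n : ℕ) {K K' M M' : ModuleCat.{u} A}
    (_ : (↥K) ≃ₗ[A] (↥K')) (_ : (↥M) ≃ₗ[A] (↥M')),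
    IsSyzygy A n K M → IsSyzygy A n K' M'
  | 0, K, K', M, M', eK, eM, ⟨e⟩ => ⟨eK.symm.trans (e.trans eM)⟩
  | n + 1, K, K', M, M', eK, eM, ⟨k, f, hf, h⟩ => by
    refine ⟨k, eM.toLinearMap.comp f, eM.surjective.comp hf, ?_⟩
    have hker : ker (eM.toLinearMap.comp f) = ker f := by
      rw [ker_comp, LinearEquiv.ker, comap_bot]
    exact isSyzygy_congr n eK (LinearEquiv.ofEq _ _ hker.symm) h

/-- Iterated Schanuel: `n`-th syzygies of stably isomorphic modules are stably isomorphic. -/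
theorem syzygy_stiso (n : ℕ) : ∀ (K K' M M' : ModuleCat.{u} A),
    IsSyzygy A n K M → IsSyzygy A n K' M' → StIso A (↥M) (↥M') → StIso A (↥K) (↥K') := by
  induction n with
  | zero =>
    rintro K K' M M' ⟨e⟩ ⟨e'⟩ h
    exact h.congr e.symm e'.symm
  | succ n ih =>
    rintro K K' M M' ⟨k, f, hf, h⟩ ⟨k', f', hf', h'⟩ ⟨a, b, ⟨e⟩⟩
    let G : ((Fin k → A) × (Fin a → A)) →ₗ[A] ((↥M) × (Fin a → A)) :=
      f.prodMap LinearMap.id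
    let F : ((Fin k → A) × (Fin a → A)) →ₗ[A] ((↥M') × (Fin b → A)) :=
      e.toLinearMap.comp G
    let F' : ((Fin k' → A) × (Fin b → A)) →ₗ[A] ((↥M') × (Fin b → A)) :=
      f'.prodMap LinearMap.id
    have hG : Function.Surjective G := hf.prodMap Function.surjective_id
    have hF : Function.Surjective F := e.surjective.comp hG
    have hF' : Function.Surjective F' := hf'.prodMap Function.surjective_id
    obtain ⟨E⟩ := schanuel F F' hF hF'
    have hkF : ker F = ker G := by
      show ker (e.toLinearMap.comp G) = ker G
      rw [ker_comp, LinearEquiv.ker, comap_bot]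
    let eF : ↥(ker F) ≃ₗ[A] ↥(ker f) :=
      (LinearEquiv.ofEq _ _ hkF).trans (kerProdMapIdEquiv f _)
    let eF' : ↥(ker F') ≃ₗ[A] ↥(ker f') := kerProdMapIdEquiv f' _
    have hst : StIso A ↥(ker f) ↥(ker f') := by
      refine ⟨k' + b, k + a, ⟨?_⟩⟩
      have t1 : (↥(ker f) × (Fin (k' + b) → A)) ≃ₗ[A] (↥(ker F) × ((Fin k' → A) × (Fin b → A))) :=
        eF.symm.prodCongr (finProd k' b).symm
      have t3 : (↥(ker F') × ((Fin k → A) × (Fin a → A))) ≃ₗ[A] (↥(ker f') × (Fin (k + a) → A)) :=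
        eF'.prodCongr (finProd k a)
      exact (t1.trans E).trans t3
    exact ih K K' (ModuleCat.of A (ker f)) (ModuleCat.of A (ker f')) h h' hst

end General

section Quot

variable {A : Type u}
variable {R : Type u} [CommRing R] (x : R)

theorem mem_span_singleton_smul_top {N : Type u} [AddCommGroup N] [Module R N] (v : N) :
    v ∈ (Ideal.span {x} • ⊤ : Submodule R N) ↔ ∃ w, x • w = v := by
  rw [Submodule.ideal_span_singleton_smul]
  constructor
  · intro h
    have h' : v ∈ x • ((⊤ : Submodule R N) : Set N) := by
      rw [← Submodule.coe_pointwise_smul]; exact h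
    obtain ⟨w, -, hw⟩ := Set.mem_smul_set.1 h'
    exact ⟨w, hw⟩
  · rintro ⟨w, rfl⟩
    exact Submodule.smul_mem_pointwise_smul w x ⊤ trivial

/-- quotient equivalence induced by a linear equivalence -/
noncomputable def qeq {N N' : Type u} [AddCommGroup N] [Module R N] [AddCommGroup N'] [Module R N']
    (e : N ≃ₗ[R] N') :
    ((N ⧸ (Ideal.span {x} • ⊤ : Submodule R N)) ≃ₗ[R ⧸ Ideal.span {x}]
      (N' ⧸ (Ideal.span {x} • ⊤ : Submodule R N'))) :=
  LinearEquiv.extendScalarsOfSurjective Ideal.Quotient.mk_surjective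
    (Submodule.Quotient.equiv _ _ e (by
      have h := Submodule.map_smul'' (Ideal.span {x}) (⊤ : Submodule R N) (e : N →ₗ[R] N')
      refine h.trans ?_
      rw [Submodule.map_top, LinearEquiv.range]))

theorem smul_top_prod (N P : Type u) [AddCommGroup N] [Module R N] [AddCommGroup P] [Module R P] :
    (Ideal.span {x} • ⊤ : Submodule R (N × P)) =
      (Ideal.span {x} • ⊤ : Submodule R N).prod (Ideal.span {x} • ⊤ : Submodule R P) := by
  apply le_antisymm
  · refine Submodule.smul_le.2 fun r hr m _ => ?_
    exact Submodule.mem_prod.2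
      ⟨Submodule.smul_mem_smul hr trivial, Submodule.smul_mem_smul hr trivial⟩
  · intro m hm
    obtain ⟨hn, hp⟩ := Submodule.mem_prod.1 hm
    have h1 : ((m.1, 0) : N × P) ∈ (Ideal.span {x} • ⊤ : Submodule R (N × P)) := by
      have hle : Submodule.map (LinearMap.inl R N P)
          (Ideal.span {x} • ⊤ : Submodule R N) ≤ (Ideal.span {x} • ⊤ : Submodule R (N × P)) := by
        rw [Submodule.map_smul'']
        exact Submodule.smul_mono le_rfl le_top
      exact hle ⟨m.1, hn, rfl⟩
    have h2 : ((0, m.2) : N × P) ∈ (Ideal.span {x} • ⊤ : Submodule R (N × P)) := by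
      have hle : Submodule.map (LinearMap.inr R N P)
          (Ideal.span {x} • ⊤ : Submodule R P) ≤ (Ideal.span {x} • ⊤ : Submodule R (N × P)) := by
        rw [Submodule.map_smul'']
        exact Submodule.smul_mono le_rfl le_top
      exact hle ⟨m.2, hp, rfl⟩
    have hm' : m = (m.1, 0) + (0, m.2) := by simp
    rw [hm']
    exact add_mem h1 h2

/-- quotient of a product -/
noncomputable def quotProd (N P : Type u) [AddCommGroup N] [Module R N] [AddCommGroup P]
    [Module R P] :
    (((N × P) ⧸ (Ideal.span {x} • ⊤ : Submodule R (N × P))) ≃ₗ[R ⧸ Ideal.span {x}]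
      ((N ⧸ (Ideal.span {x} • ⊤ : Submodule R N)) ×
        (P ⧸ (Ideal.span {x} • ⊤ : Submodule R P)))) :=
  LinearEquiv.extendScalarsOfSurjective Ideal.Quotient.mk_surjective <|
    (Submodule.quotEquivOfEq _ _ (by
        rw [LinearMap.ker_prodMap, Submodule.ker_mkQ, Submodule.ker_mkQ]
        exact smul_top_prod x N P)).trans
      (((Ideal.span {x} • ⊤ : Submodule R N).mkQ.prodMap
        (Ideal.span {x} • ⊤ : Submodule R P).mkQ).quotKerEquivOfSurjective
        ((Submodule.mkQ_surjective _).prodMap (Submodule.mkQ_surjective _)))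

theorem smul_top_pi (k : ℕ) :
    (Ideal.span {x} • ⊤ : Submodule R (Fin k → R)) =
      ker (LinearMap.pi fun i : Fin k =>
        (Ideal.span {x} : Submodule R R).mkQ.comp (LinearMap.proj i)) := by
  apply le_antisymm
  · refine Submodule.smul_le.2 fun r hr v _ => ?_
    rw [mem_ker]
    funext i
    show (Ideal.span {x} : Submodule R R).mkQ (r • v i) = 0
    rw [Submodule.mkQ_apply, Submodule.Quotient.mk_eq_zero]
    exact Ideal.mul_mem_right (v i) _ hr
  · intro v hv
    have hvi : ∀ i, v i ∈ Ideal.span {x} := by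
      intro i
      have h := congrFun (mem_ker.1 hv) i
      have h' : (Ideal.span {x} : Submodule R R).mkQ (v i) = 0 := h
      rwa [Submodule.mkQ_apply, Submodule.Quotient.mk_eq_zero] at h'
    have hv' : v = ∑ i, Pi.single i (v i) := (Finset.univ_sum_single v).symm
    rw [hv']
    refine Submodule.sum_mem _ fun i _ => ?_
    have hsingle : Pi.single i (v i) = v i • (Pi.single i (1 : R) : Fin k → R) := by
      rw [← Pi.single_smul, smul_eq_mul, mul_one]
    rw [hsingle]
    exact Submodule.smul_mem_smul (hvi i) trivial

/-- quotient of a finite free module -/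
noncomputable def quotFree (k : ℕ) :
    (((Fin k → R) ⧸ (Ideal.span {x} • ⊤ : Submodule R (Fin k → R))) ≃ₗ[R ⧸ Ideal.span {x}]
      (Fin k → R ⧸ Ideal.span {x})) :=
  LinearEquiv.extendScalarsOfSurjective Ideal.Quotient.mk_surjective <|
    (Submodule.quotEquivOfEq _ _ (smul_top_pi x k)).trans
      ((LinearMap.pi fun i : Fin k =>
          (Ideal.span {x} : Submodule R R).mkQ.comp (LinearMap.proj i)).quotKerEquivOfSurjective
        (fun w => by
          choose v hv using fun i => Submodule.mkQ_surjective (Ideal.span {x} : Submodule R R) (w i)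
          exact ⟨v, funext fun i => hv i⟩))

variable {M F : Type u} [AddCommGroup M] [Module R M] [AddCommGroup F] [Module R F]

/-- the induced map on quotients -/
noncomputable def qmap (f : F →ₗ[R] M) :
    ((F ⧸ (Ideal.span {x} • ⊤ : Submodule R F)) →ₗ[R ⧸ Ideal.span {x}]
      (M ⧸ (Ideal.span {x} • ⊤ : Submodule R M))) :=
  LinearMap.extendScalarsOfSurjective Ideal.Quotient.mk_surjective
    (Submodule.mapQ _ _ f (Submodule.smul_le.2 fun r hr m _ => by
      rw [Submodule.mem_comap, map_smul]
      exact Submodule.smul_mem_smul hr trivial))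

theorem qmap_apply (f : F →ₗ[R] M) (a : F) :
    qmap x f (Submodule.Quotient.mk a) = Submodule.Quotient.mk (f a) := rfl

theorem qmap_surjective (f : F →ₗ[R] M) (hf : Function.Surjective f) :
    Function.Surjective (qmap x f) := by
  intro u
  obtain ⟨a, rfl⟩ := Submodule.mkQ_surjective _ u
  obtain ⟨b, rfl⟩ := hf a
  exact ⟨Submodule.Quotient.mk b, qmap_apply x f b⟩

theorem isSMulRegular_pi (hx : x ∈ nonZeroDivisors R) (k : ℕ) :
    IsSMulRegular (Fin k → R) x := by
  intro a b hab
  funext i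
  have h : x * a i = x * b i := congrFun hab i
  have h' : (a i - b i) * x = 0 := by
    rw [sub_mul, mul_comm (a i) x, mul_comm (b i) x, h, sub_self]
  exact sub_eq_zero.1 (mem_nonZeroDivisors_iff_right.1 hx _ h')

theorem isSMulRegular_submodule {N : Type u} [AddCommGroup N] [Module R N] (p : Submodule R N)
    (h : IsSMulRegular N x) : IsSMulRegular (↥p) x := fun a b hab =>
  Subtype.ext (h (Subtype.ext_iff.1 hab))

/-- the kernel of the induced map on quotients is the quotient of the kernel,
for `x` regular on `M`. -/
noncomputable def kerQuotEquiv (f : F →ₗ[R] M) (hf : Function.Surjective f)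
    (hreg : IsSMulRegular M x) :
    ((↥(ker f) ⧸ (Ideal.span {x} • ⊤ : Submodule R ↥(ker f))) ≃ₗ[R ⧸ Ideal.span {x}]
      ↥(ker (qmap x f))) := by
  set p : Submodule (R ⧸ Ideal.span {x}) (F ⧸ (Ideal.span {x} • ⊤ : Submodule R F)) :=
    ker (qmap x f) with hp
  let g : ↥(ker f) →ₗ[R] ↥(p.restrictScalars R) :=
    LinearMap.codRestrict _ ((Ideal.span {x} • ⊤ : Submodule R F).mkQ.comp (ker f).subtype)
      (fun v => by
        rw [Submodule.restrictScalars_mem, hp, mem_ker, LinearMap.comp_apply,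
          Submodule.mkQ_apply, qmap_apply,
          show f ((ker f).subtype v) = f (v : F) from rfl, mem_ker.1 v.2]
        simp)
  have hgsurj : Function.Surjective g := by
    intro u
    obtain ⟨a, ha⟩ := Submodule.mkQ_surjective _ (u : F ⧸ (Ideal.span {x} • ⊤ : Submodule R F))
    have hu : qmap x f (Submodule.Quotient.mk a) = 0 := by
      rw [Submodule.mkQ_apply] at ha
      rw [ha]
      exact mem_ker.1 (Submodule.restrictScalars_mem _ _ _ |>.1 u.2)
    rw [qmap_apply] at hu
    have hfa : f a ∈ (Ideal.span {x} • ⊤ : Submodule R M) :=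
      (Submodule.Quotient.mk_eq_zero _).1 hu
    obtain ⟨m, hm⟩ := (mem_span_singleton_smul_top x _).1 hfa
    obtain ⟨b, rfl⟩ := hf m
    have hker : a - x • b ∈ ker f := by
      rw [mem_ker, map_sub, map_smul, hm, sub_self]
    refine ⟨⟨a - x • b, hker⟩, ?_⟩
    apply Subtype.ext
    show Submodule.Quotient.mk (a - x • b) = (u : F ⧸ (Ideal.span {x} • ⊤ : Submodule R F))
    rw [← ha, Submodule.mkQ_apply, Submodule.Quotient.eq]
    simpa using neg_mem (Submodule.smul_mem_smul (Ideal.mem_span_singleton_self x)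
      (Submodule.mem_top : b ∈ ⊤))
  have hkerg : ker g = (Ideal.span {x} • ⊤ : Submodule R ↥(ker f)) := by
    ext v
    rw [mem_ker]
    constructor
    · intro h
      have h0 : Submodule.Quotient.mk (v : F) = (0 : F ⧸ (Ideal.span {x} • ⊤ : Submodule R F)) :=
        Subtype.ext_iff.1 h
      have h1 : (v : F) ∈ (Ideal.span {x} • ⊤ : Submodule R F) :=
        (Submodule.Quotient.mk_eq_zero _).1 h0
      obtain ⟨w, hw⟩ := (mem_span_singleton_smul_top x _).1 h1
      have hwker : w ∈ ker f := by
        rw [mem_ker]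
        apply hreg
        show x • f w = x • 0
        rw [smul_zero, ← map_smul, hw]
        exact mem_ker.1 v.2
      rw [Submodule.mem_smul_top_iff, Submodule.ideal_span_singleton_smul, ← hw]
      exact Submodule.smul_mem_pointwise_smul w x (ker f) hwker
    · intro h
      have h1 : (v : F) ∈ Ideal.span {x} • (ker f) := (Submodule.mem_smul_top_iff _ _ _).1 h
      have h2 : (v : F) ∈ (Ideal.span {x} • ⊤ : Submodule R F) :=
        Submodule.smul_mono le_rfl le_top h1
      exact Subtype.ext ((Submodule.Quotient.mk_eq_zero _).2 h2)
  exact LinearEquiv.extendScalarsOfSurjective Ideal.Quotient.mk_surjective <|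
    ((Submodule.quotEquivOfEq _ _ hkerg.symm).trans (g.quotKerEquivOfSurjective hgsurj)).trans
      ((Submodule.restrictScalarsEquiv R (R ⧸ Ideal.span {x}) _ p).restrictScalars R)

/-- quotienting a syzygy by a regular element gives a syzygy over the quotient ring. -/
theorem quot_syzygy (hx : x ∈ nonZeroDivisors R) (n : ℕ) : ∀ (K M : ModuleCat.{u} R),
    IsSMulRegular (↥M) x → IsSyzygy R n K M →
    IsSyzygy (R ⧸ Ideal.span {x}) n
      (ModuleCat.of _ (↥K ⧸ (Ideal.span {x} • ⊤ : Submodule R ↥K)))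
      (ModuleCat.of _ (↥M ⧸ (Ideal.span {x} • ⊤ : Submodule R ↥M))) := by
  induction n with
  | zero =>
    rintro K M hreg ⟨e⟩
    exact ⟨qeq x e⟩
  | succ n ih =>
    rintro K M hreg ⟨k, f, hf, h⟩
    let ε : (Fin k → R ⧸ Ideal.span {x}) ≃ₗ[R ⧸ Ideal.span {x}]
      ((Fin k → R) ⧸ (Ideal.span {x} • ⊤ : Submodule R (Fin k → R))) := (quotFree x k).symm
    let Fbar := (qmap x f).comp (ε : (Fin k → R ⧸ Ideal.span {x}) →ₗ[R ⧸ Ideal.span {x}] _)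
    have hFbar : Function.Surjective Fbar := (qmap_surjective x f hf).comp ε.surjective
    refine ⟨k, Fbar, hFbar, ?_⟩
    have hcomap : ker Fbar = Submodule.comap (ε : (Fin k → R ⧸ Ideal.span {x}) →ₗ[R ⧸ Ideal.span {x}] _) (ker (qmap x f)) :=
      ker_comp _ _
    have hmap : Submodule.map (ε : (Fin k → R ⧸ Ideal.span {x}) →ₗ[R ⧸ Ideal.span {x}] _)
        (ker Fbar) = ker (qmap x f) := by
      rw [hcomap]
      exact Submodule.map_comap_eq_of_surjective ε.surjective _
    have hregker : IsSMulRegular (↥(ker f)) x := isSMulRegular_submodule x _ (isSMulRegular_pi x hx k)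
    have hIH := ih K (ModuleCat.of R (↥(ker f))) hregker h
    refine isSyzygy_congr n (LinearEquiv.refl _ _) ?_ hIH
    exact (kerQuotEquiv x f hf hreg).trans
      ((ε.submoduleMap (ker Fbar)).trans (LinearEquiv.ofEq _ _ hmap)).symm

end Quot

end SyzAux

/-- **Syzygies modulo a regular element** (Dao–Takahashi). Let `x` be a nonzerodivisor of the
commutative Noetherian ring `R` and `M` a finitely generated `R`-module on which `x` is a
nonzerodivisor with `xM ≠ M`. For any first syzygy `Ω` of `M` over `R`, any `(n+1)`-st syzygy
`K` of `M` over `R`, and any `n`-th syzygy `T` of `Ω/xΩ` over `R/xR`, the `R/xR`-modules `T`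
and `K/xK` are stably isomorphic (isomorphic up to finitely generated free direct summands). -/
theorem syzygy_quotient_regular_element
    [IsNoetherianRing R] (x : R) (hx : x ∈ nonZeroDivisors R)
    (M : ModuleCat.{u} R) [Module.Finite R M]
    (hreg : IsSMulRegular M x) (hne : Ideal.span {x} • (⊤ : Submodule R ↥M) ≠ ⊤) (n : ℕ)
    (Ω K : ModuleCat.{u} R)
    (hΩ : IsSyzygy R 1 Ω M) (hK : IsSyzygy R (n + 1) K M)
    (T : ModuleCat.{u} (R ⧸ Ideal.span {x}))
    (hT : IsSyzygy (R ⧸ Ideal.span {x}) n T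
      (ModuleCat.of (R ⧸ Ideal.span {x})
        (↥Ω ⧸ (Ideal.span {x} • (⊤ : Submodule R ↥Ω))))) :
    ∃ a b : ℕ,
      Nonempty ((↥T × (Fin a → R ⧸ Ideal.span {x}))
        ≃ₗ[R ⧸ Ideal.span {x}]
          ((↥K ⧸ (Ideal.span {x} • (⊤ : Submodule R ↥K))) × (Fin b → R ⧸ Ideal.span {x}))) := by
  classical
  obtain ⟨k, f, hf, hKf⟩ := hK
  obtain ⟨j, g, hg, ⟨eΩ⟩⟩ := hΩ
  have hregker : IsSMulRegular (↥(LinearMap.ker f)) x :=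
    SyzAux.isSMulRegular_submodule x _ (SyzAux.isSMulRegular_pi x hx k)
  have hKq := SyzAux.quot_syzygy x hx n K (ModuleCat.of R (LinearMap.ker f)) hregker hKf
  obtain ⟨E⟩ := SyzAux.schanuel f g hf hg
  have stiso : SyzAux.StIso (R ⧸ Ideal.span {x})
      (↥(LinearMap.ker f) ⧸ (Ideal.span {x} • (⊤ : Submodule R ↥(LinearMap.ker f))))
      (↥Ω ⧸ (Ideal.span {x} • (⊤ : Submodule R ↥Ω))) := by
    refine ⟨j, k, ⟨?_⟩⟩
    have c1 : ((↥(LinearMap.ker f) ⧸ (Ideal.span {x} • (⊤ : Submodule R ↥(LinearMap.ker f)))) ×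
        (Fin j → R ⧸ Ideal.span {x})) ≃ₗ[R ⧸ Ideal.span {x}]
        ((↥(LinearMap.ker f) ⧸ (Ideal.span {x} • (⊤ : Submodule R ↥(LinearMap.ker f)))) ×
        ((Fin j → R) ⧸ (Ideal.span {x} • (⊤ : Submodule R (Fin j → R))))) :=
      (LinearEquiv.refl _ _).prodCongr (SyzAux.quotFree x j).symm
    have c2 := (SyzAux.quotProd x (↥(LinearMap.ker f)) (Fin j → R)).symm
    have c3 := SyzAux.qeq x E
    have c4 := SyzAux.quotProd x (↥(LinearMap.ker g)) (Fin k → R)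
    have c5 := (SyzAux.qeq x eΩ.symm).prodCongr (SyzAux.quotFree x k)
    exact (((c1.trans c2).trans c3).trans c4).trans c5
  have main := SyzAux.syzygy_stiso n T
    (ModuleCat.of _ (↥K ⧸ (Ideal.span {x} • (⊤ : Submodule R ↥K))))
    (ModuleCat.of _ (↥Ω ⧸ (Ideal.span {x} • (⊤ : Submodule R ↥Ω))))
    (ModuleCat.of _ (↥(LinearMap.ker f) ⧸
      (Ideal.span {x} • (⊤ : Submodule R ↥(LinearMap.ker f)))))
    hT hKq stiso.symm
  exact main
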